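/- Let U ⊆ ℝⁿ be open, let f : U → ℝ be C², let c ∈ U with ∇f(c) = 0, and suppose the closed ball of radius ε > 0 around c is contained in U. Suppose γ : (0,ε) → U and λ : (0,ε) → ℝ satisfy ‖γ(t) − c‖ = t, ∇f(γ(t)) = λ(t)(γ(t) − c), and f(γ(t)) = min{f(x) : ‖x − c‖ = t} for all t ∈ (0,ε), and that the limits v = lim_{t→0⁺} (γ(t) − c)/t and λ₀ = lim_{t→0⁺} λ(t) exist. Then λ₀ equals the smallest eigenvalue of the Hessian ∇²f(c), and v is a unit eigenvector of ∇²f(c) associated with its smallest eigenvalue. -/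

import Mathlib

open Filter Asymptotics InnerProductSpace
open scoped RealInnerProductSpace Topology


variable {E : Type*} [NormedAddCommGroup E] [InnerProductSpace ℝ E] [CompleteSpace E]

lemma aux_inv_smul_tendsto {p : ℝ → E}
    (h : p =o[𝓝[>] (0:ℝ)] fun t => t) :
    Tendsto (fun t => t⁻¹ • p t) (𝓝[>] (0:ℝ)) (𝓝 0) := by
  rw [NormedAddCommGroup.tendsto_nhds_zero]
  intro e he
  filter_upwards [h.def (half_pos he), self_mem_nhdsWithin] with t ht ht0
  have ht0' : (0:ℝ) < t := ht0
  rw [norm_smul, norm_inv, Real.norm_eq_abs, abs_of_pos ht0']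
  rw [Real.norm_eq_abs, abs_of_pos ht0'] at ht
  calc t⁻¹ * ‖p t‖ ≤ t⁻¹ * (e/2 * t) := by
        apply mul_le_mul_of_nonneg_left ht (by positivity)
    _ = e/2 := by field_simp
    _ < e := by linarith

lemma aux_taylor2 {f : E → ℝ} {c : E} {H : E →L[ℝ] E}
    (hfd : ∀ᶠ y in 𝓝 c, DifferentiableAt ℝ f y)
    (hg : HasFDerivAt (gradient f) H c) (hgc : gradient f c = 0)
    (hsymm : ∀ a b : E, ⟪H a, b⟫_ℝ = ⟪a, H b⟫_ℝ) :
    (fun x => f x - f c - (1/2) * ⟪H (x - c), x - c⟫_ℝ) =o[𝓝 c] (fun x => ‖x - c‖ ^ 2) := by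
  set φ : E → ℝ := fun x => f x - (1/2) * ⟪H (x - c), x - c⟫_ℝ with hφ
  have hφderiv : ∀ y : E, DifferentiableAt ℝ f y →
      HasFDerivAt φ ((toDual ℝ E) (gradient f y - H (y - c))) y := by
    intro y hy
    have h1 : HasFDerivAt (fun x : E => H (x - c)) H y := by
      exact (ContinuousLinearMap.comp_id H) ▸ (H.hasFDerivAt.comp y ((hasFDerivAt_id y).sub_const c))
    have h2 : HasFDerivAt (fun x : E => x - c) (ContinuousLinearMap.id ℝ E) y :=
      (hasFDerivAt_id y).sub_const c
    have hq := h1.inner ℝ h2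
    have hf' := hy.hasFDerivAt.sub (hq.const_mul (1/2))
    refine hf'.congr_fderiv (Eq.symm ?_)
    ext h
    simp only [ContinuousLinearMap.coe_sub', Pi.sub_apply, ContinuousLinearMap.coe_smul',
      Pi.smul_apply, ContinuousLinearMap.coe_comp', Function.comp_apply,
      ContinuousLinearMap.prod_apply, fderivInnerCLM_apply, ContinuousLinearMap.coe_id', id_eq,
      smul_eq_mul, toDual_apply_apply, inner_sub_left]
    have hsy : ⟪H h, y - c⟫_ℝ = ⟪H (y - c), h⟫_ℝ := by
      rw [hsymm h (y - c)]; exact real_inner_comm _ _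
    have hgy : ⟪gradient f y, h⟫_ℝ = fderiv ℝ f y h := by
      have : (toDual ℝ E) (gradient f y) = fderiv ℝ f y := by
        simp [gradient]
      rw [← this, toDual_apply_apply]
    rw [hgy, hy.hasFDerivAt.fderiv]
    ring_nf
    rw [hsy]
    ring
  rw [isLittleO_iff]
  intro C hC
  have hlo := hg.isLittleO
  rw [isLittleO_iff] at hlo
  obtain ⟨δ, hδpos, hδ⟩ := Metric.eventually_nhds_iff.1 ((hlo hC).and hfd)
  have hballmem : Metric.ball c δ ∈ 𝓝 c := Metric.ball_mem_nhds c hδpos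
  filter_upwards [hballmem] with x hx
  rcases eq_or_ne x c with rfl | hxc
  · simp
  have hxδ : ‖x - c‖ < δ := by rwa [← dist_eq_norm, ← Metric.mem_ball]
  have hsub : Metric.closedBall c ‖x - c‖ ⊆ Metric.ball c δ := fun y hy =>
    Metric.mem_ball.2 (lt_of_le_of_lt (Metric.mem_closedBall.1 hy) hxδ)
  have key : ‖φ x - φ c‖ ≤ C * ‖x - c‖ * ‖x - c‖ := by
    apply Convex.norm_image_sub_le_of_norm_hasFDerivWithin_le
      (f' := fun y => (toDual ℝ E) (gradient f y - H (y - c)))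
      (fun y hy => (hφderiv y (hδ (hsub hy)).2).hasFDerivWithinAt)
      (fun y hy => ?_) (convex_closedBall c ‖x - c‖)
      (Metric.mem_closedBall_self (norm_nonneg _)) (by simp [Metric.mem_closedBall, dist_eq_norm])
    · rw [LinearIsometryEquiv.norm_map]
      have h1 : ‖gradient f y - gradient f c - H (y - c)‖ ≤ C * ‖y - c‖ := by
        have := (hδ (hsub hy)).1
        simpa [dist_eq_norm] using this
      rw [hgc, sub_zero] at h1
      calc ‖gradient f y - H (y - c)‖ ≤ C * ‖y - c‖ := h1
        _ ≤ C * ‖x - c‖ := by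
            apply mul_le_mul_of_nonneg_left _ hC.le
            simpa [Metric.mem_closedBall, dist_eq_norm] using hy
  have hφc : φ c = f c := by simp [hφ]
  have hgoal : f x - f c - 1/2 * ⟪H (x - c), x - c⟫_ℝ = φ x - φ c := by
    rw [hφc]; ring
  rw [hgoal]
  calc ‖φ x - φ c‖ ≤ C * ‖x - c‖ * ‖x - c‖ := key
    _ = C * ‖‖x - c‖ ^ 2‖ := by
        rw [Real.norm_of_nonneg (by positivity)]; ring

/-- If moreover the tangency arc realizes the minimum of `f` on each
sphere of radius `t` around the critical point `c`, then the limit `λ₀` equals the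
smallest eigenvalue of the Hessian `∇²f(c)` (realized as the derivative of the
gradient at `c`), and `v` is a unit eigenvector associated with it. -/
theorem min_tangency_arc_tangent_to_min_eigenspace {n : ℕ}
    (U : Set (EuclideanSpace ℝ (Fin n))) (hU : IsOpen U)
    (f : EuclideanSpace ℝ (Fin n) → ℝ) (hf : ContDiffOn ℝ 2 f U)
    (c : EuclideanSpace ℝ (Fin n)) (hc : c ∈ U) (hcrit : gradient f c = 0)
    (ε : ℝ) (hε : 0 < ε) (hball : Metric.closedBall c ε ⊆ U)
    (γ : ℝ → EuclideanSpace ℝ (Fin n)) (lam : ℝ → ℝ)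
    (hγU : ∀ t ∈ Set.Ioo (0 : ℝ) ε, γ t ∈ U)
    (harc : ∀ t ∈ Set.Ioo (0 : ℝ) ε, ‖γ t - c‖ = t)
    (htan : ∀ t ∈ Set.Ioo (0 : ℝ) ε, gradient f (γ t) = lam t • (γ t - c))
    (hmin : ∀ t ∈ Set.Ioo (0 : ℝ) ε, ∀ x : EuclideanSpace ℝ (Fin n),
      ‖x - c‖ = t → f (γ t) ≤ f x)
    (v : EuclideanSpace ℝ (Fin n)) (lam0 : ℝ)
    (hv : Tendsto (fun t => t⁻¹ • (γ t - c)) (nhdsWithin 0 (Set.Ioi 0)) (nhds v))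
    (hlam : Tendsto lam (nhdsWithin 0 (Set.Ioi 0)) (nhds lam0)) :
    ‖v‖ = 1 ∧ fderiv ℝ (gradient f) c v = lam0 • v ∧
      ∀ (μ : ℝ) (w : EuclideanSpace ℝ (Fin n)), w ≠ 0 →
        fderiv ℝ (gradient f) c w = μ • w → lam0 ≤ μ := by
  set l : Filter ℝ := 𝓝[>] (0:ℝ) with hl
  have hmem : ∀ᶠ t in l, t ∈ Set.Ioo (0:ℝ) ε :=
    Ioo_mem_nhdsGT_of_mem ⟨le_refl 0, hε⟩
  -- basic smoothness facts
  have hC2 : ContDiffAt ℝ 2 f c := hf.contDiffAt (hU.mem_nhds hc)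
  have hfd : ∀ᶠ y in 𝓝 c, DifferentiableAt ℝ f y := by
    filter_upwards [hU.mem_nhds hc] with y hy
    exact ((hf.differentiableOn (by norm_num)) y hy).differentiableAt (hU.mem_nhds hy)
  have hd2 : DifferentiableAt ℝ (fderiv ℝ f) c :=
    (hC2.fderiv_right (m := 1) (by norm_num)).differentiableAt (by norm_num)
  set D2 := fderiv ℝ (fderiv ℝ f) c with hD2
  set A : StrongDual ℝ (EuclideanSpace ℝ (Fin n)) →L[ℝ] (EuclideanSpace ℝ (Fin n)) :=
    (toDual ℝ (EuclideanSpace ℝ (Fin n))).symm.toContinuousLinearEquiv.toContinuousLinearMap with hA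
  have hgrad : HasFDerivAt (gradient f) (A.comp D2) c := by
    have := A.hasFDerivAt.comp c hd2.hasFDerivAt
    exact this
  set H := fderiv ℝ (gradient f) c with hHdef
  have hHeq : H = A.comp D2 := hgrad.fderiv
  have hH : HasFDerivAt (gradient f) H c := hHeq ▸ hgrad
  have hsymm : ∀ a b : EuclideanSpace ℝ (Fin n), ⟪H a, b⟫_ℝ = ⟪a, H b⟫_ℝ := by
    have hsnd := hC2.isSymmSndFDerivAt (by norm_num)
    intro a b
    have h1 : ∀ z w : EuclideanSpace ℝ (Fin n), ⟪H z, w⟫_ℝ = D2 z w := by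
      intro z w
      rw [hHeq]
      simp only [ContinuousLinearMap.coe_comp', Function.comp_apply, hA,
        ContinuousLinearEquiv.coe_coe, LinearIsometryEquiv.coe_toContinuousLinearEquiv]
      exact toDual_symm_apply
    rw [h1, real_inner_comm, h1]
    exact hsnd a b
  -- the curve tends to c
  have htid : Tendsto (fun t : ℝ => t) l (𝓝 0) := tendsto_id.mono_right nhdsWithin_le_nhds
  have hγsub : Tendsto (fun t => γ t - c) l (𝓝 0) := by
    have h1 : Tendsto (fun t : ℝ => t • (t⁻¹ • (γ t - c))) l (𝓝 ((0:ℝ) • v)) :=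
      htid.smul hv
    rw [zero_smul] at h1
    apply h1.congr'
    filter_upwards [hmem] with t ht
    rw [smul_inv_smul₀ ht.1.ne']
  have hγc : Tendsto γ l (𝓝 c) := by
    have := hγsub.add_const c
    rw [zero_add] at this
    simpa using this
  -- Part 1 : ‖v‖ = 1
  have hnorm1 : ‖v‖ = 1 := by
    have h1 : Tendsto (fun t => ‖t⁻¹ • (γ t - c)‖) l (𝓝 ‖v‖) :=
      (continuous_norm.tendsto v).comp hv
    have h2 : Tendsto (fun t => ‖t⁻¹ • (γ t - c)‖) l (𝓝 1) := by
      apply Tendsto.congr' _ (tendsto_const_nhds (α := ℝ) (x := (1:ℝ)))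
      filter_upwards [hmem] with t ht
      rw [norm_smul, harc t ht, norm_inv, Real.norm_eq_abs, abs_of_pos ht.1,
        inv_mul_cancel₀ ht.1.ne']
    exact tendsto_nhds_unique h1 h2
  -- Part 2 : H v = lam0 • v
  have hr : (fun t => gradient f (γ t) - H (γ t - c)) =o[l] fun t => t := by
    have h1 := hH.isLittleO.comp_tendsto hγc
    rw [hcrit] at h1
    simp only [sub_zero, Function.comp_def] at h1
    apply h1.trans_isBigO
    rw [isBigO_iff]
    refine ⟨1, ?_⟩
    filter_upwards [hmem] with t ht
    simp [harc t ht, Real.norm_eq_abs, abs_of_pos ht.1]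
  have h2 : Tendsto (fun t => t⁻¹ • (gradient f (γ t) - H (γ t - c))) l (𝓝 0) :=
    aux_inv_smul_tendsto hr
  have h3 : Tendsto (fun t => H (t⁻¹ • (γ t - c))) l (𝓝 (H v)) :=
    (H.continuous.tendsto v).comp hv
  have h4 : Tendsto (fun t => t⁻¹ • gradient f (γ t)) l (𝓝 (H v)) := by
    have := h3.add h2
    rw [add_zero] at this
    apply this.congr
    intro t
    rw [map_smul, ← smul_add, add_sub_cancel]
  have h5 : Tendsto (fun t => t⁻¹ • gradient f (γ t)) l (𝓝 (lam0 • v)) := by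
    apply Tendsto.congr' _ (hlam.smul hv)
    filter_upwards [hmem] with t ht
    rw [htan t ht, smul_comm]
  have hpart2 : H v = lam0 • v := tendsto_nhds_unique h4 h5
  refine ⟨hnorm1, hpart2, ?_⟩
  -- Part 3
  intro μ w hw hwe
  have hT := aux_taylor2 hfd hH hcrit hsymm
  set u : EuclideanSpace ℝ (Fin n) := ‖w‖⁻¹ • w with hu
  have hwn : ‖w‖ ≠ 0 := norm_ne_zero_iff.2 hw
  have hun : ‖u‖ = 1 := by
    rw [hu, norm_smul, norm_inv, norm_norm, inv_mul_cancel₀ hwn]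
  have hHu : H u = μ • u := by
    rw [hu, map_smul, hwe, smul_comm]
  have hQu : ⟪H u, u⟫_ℝ = μ := by
    rw [hHu, real_inner_smul_left, real_inner_self_eq_norm_sq, hun]
    ring
  have hQv : ⟪H v, v⟫_ℝ = lam0 := by
    rw [hpart2, real_inner_smul_left, real_inner_self_eq_norm_sq, hnorm1]
    ring
  have hne : ∀ᶠ t in l, t ≠ 0 := by
    filter_upwards [self_mem_nhdsWithin] with t ht
    exact ne_of_gt ht
  have hdivsplit : ∀ (X C t : ℝ), t ≠ 0 → X/t^2 = (X - t^2*C)/t^2 + C := by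
    intro X C t ht
    field_simp
    ring
  -- limit along the straight path
  have hpu : Tendsto (fun t : ℝ => c + t • u) l (𝓝 c) := by
    have h1 := htid.smul_const u
    rw [zero_smul] at h1
    have h2 : Tendsto (fun t : ℝ => c + t • u) l (𝓝 (c + 0)) :=
      Tendsto.add tendsto_const_nhds h1
    rw [add_zero] at h2
    exact h2
  have hAo : (fun t : ℝ => f (c + t • u) - f c - t^2 * μ / 2) =o[l] (fun t => t^2) := by
    have h1 := hT.comp_tendsto hpu
    simp only [Function.comp_def] at h1
    apply IsLittleO.congr' (h1.congr' ?_ ?_) (EventuallyEq.refl _ _) (EventuallyEq.refl _ _)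
    · filter_upwards with t
      rw [add_sub_cancel_left, map_smul, real_inner_smul_left, real_inner_smul_right, hQu]
      ring
    · filter_upwards with t
      rw [add_sub_cancel_left, norm_smul, hun, Real.norm_eq_abs, mul_one, sq_abs]
  have hA : Tendsto (fun t : ℝ => (f (c + t • u) - f c) / t^2) l (𝓝 (μ/2)) := by
    have h0 : Tendsto (fun t : ℝ => (f (c + t • u) - f c - t^2 * μ / 2) / t^2) l (𝓝 0) := by
      have := (isLittleO_iff_tendsto' ?_).1 hAo
      · exact this
      · filter_upwards [hne] with t ht h
        exact absurd h (pow_ne_zero 2 ht)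
    have h1 := h0.add_const (μ/2)
    rw [zero_add] at h1
    apply Tendsto.congr' _ h1
    filter_upwards [hne] with t ht
    have h := hdivsplit (f (c + t • u) - f c) (μ/2) t ht
    rw [show t^2*(μ/2) = t^2*μ/2 by ring] at h
    exact h.symm
  -- limit along the arc
  have hB : Tendsto (fun t : ℝ => (f (γ t) - f c) / t^2) l (𝓝 (lam0/2)) := by
    have h1 := hT.comp_tendsto hγc
    simp only [Function.comp_def] at h1
    have hBo : (fun t : ℝ => f (γ t) - f c - 1/2 * ⟪H (γ t - c), γ t - c⟫_ℝ)
        =o[l] (fun t => t^2) := by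
      apply h1.trans_isBigO
      rw [isBigO_iff]
      refine ⟨1, ?_⟩
      filter_upwards [hmem] with t ht
      rw [harc t ht, one_mul]
    have h0B : Tendsto
        (fun t : ℝ => (f (γ t) - f c - 1/2 * ⟪H (γ t - c), γ t - c⟫_ℝ) / t^2) l (𝓝 0) := by
      have := (isLittleO_iff_tendsto' ?_).1 hBo
      · exact this
      · filter_upwards [hne] with t ht h
        exact absurd h (pow_ne_zero 2 ht)
    have hcont : Continuous (fun y : EuclideanSpace ℝ (Fin n) => 1/2 * ⟪H y, y⟫_ℝ) :=
      continuous_const.mul (H.continuous.inner continuous_id)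
    have hinner : Tendsto (fun t : ℝ =>
        1/2 * ⟪H (t⁻¹ • (γ t - c)), t⁻¹ • (γ t - c)⟫_ℝ) l (𝓝 (1/2 * lam0)) := by
      have := (hcont.tendsto v).comp hv
      rw [hQv] at this
      exact this
    have hsum := h0B.add hinner
    rw [zero_add] at hsum
    have heq : (1:ℝ)/2 * lam0 = lam0/2 := by ring
    rw [heq] at hsum
    apply Tendsto.congr' _ hsum
    filter_upwards [hne] with t ht
    have hsp : ⟪H (γ t - c), γ t - c⟫_ℝ
        = t^2 * ⟪H (t⁻¹ • (γ t - c)), t⁻¹ • (γ t - c)⟫_ℝ := by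
      conv_lhs => rw [← smul_inv_smul₀ ht (γ t - c)]
      rw [map_smul, real_inner_smul_left, real_inner_smul_right]
      ring
    have h := hdivsplit (f (γ t) - f c)
      (1/2 * ⟪H (t⁻¹ • (γ t - c)), t⁻¹ • (γ t - c)⟫_ℝ) t ht
    rw [show t^2*(1/2 * ⟪H (t⁻¹ • (γ t - c)), t⁻¹ • (γ t - c)⟫_ℝ)
        = 1/2*(t^2 * ⟪H (t⁻¹ • (γ t - c)), t⁻¹ • (γ t - c)⟫_ℝ) by ring, ← hsp] at h
    exact h.symm
  -- comparison
  have hle : (fun t : ℝ => (f (γ t) - f c) / t^2) ≤ᶠ[l]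
      (fun t : ℝ => (f (c + t • u) - f c) / t^2) := by
    filter_upwards [hmem] with t ht
    have hxt : ‖(c + t • u) - c‖ = t := by
      rw [add_sub_cancel_left, norm_smul, hun, Real.norm_eq_abs, mul_one, abs_of_pos ht.1]
    have hfle := hmin t ht (c + t • u) hxt
    have ht2 : (0:ℝ) < t^2 := pow_pos ht.1 2
    exact (div_le_div_iff_of_pos_right ht2).2 (by linarith)
  have hfin := le_of_tendsto_of_tendsto hB hA hle
  linarith
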